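/- If Σ and Υ are positive definite and 0 ≤ ε₁ ≤ ε₂ ≤ 1, and Σ and Υ commute, then the MMSE error covariance is monotone in ε: Σ − (1−ε₁²)Σ((1−ε₁²)Σ + ε₁²Υ)⁻¹Σ ⪯ Σ − (1−ε₂²)Σ((1−ε₂²)Σ + ε₂²Υ)⁻¹Σ in the Loewner order. -/

import Mathlib

open scoped ComplexOrder
open Matrix

variable {n : Type*} [Fintype n] [DecidableEq n]

lemma aux_diag_commute (C : Matrix n n ℂ) (d e : n → ℂ)
    (hC : C * diagonal d = diagonal d * C) (h : ∀ i j, d i = d j → e i = e j) :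
    C * diagonal e = diagonal e * C := by
  ext i j
  rw [mul_diagonal, diagonal_mul]
  rcases eq_or_ne (C i j) 0 with h0 | h0
  · simp [h0]
  · have h1 : C i j * d j = d i * C i j := by
      have := congrFun (congrFun hC i) j
      rwa [mul_diagonal, diagonal_mul] at this
    have hd : d i = d j := by
      rw [mul_comm (d i) (C i j)] at h1
      exact (mul_left_cancel₀ h0 h1).symm
    rw [h i j hd, mul_comm]

noncomputable def Matrix.PosSemidef.sqrt {A : Matrix n n ℂ} (hA : A.PosSemidef) : Matrix n n ℂ :=
  (hA.1.eigenvectorUnitary : Matrix n n ℂ) * diagonal ((↑) ∘ Real.sqrt ∘ hA.1.eigenvalues) *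
    star (hA.1.eigenvectorUnitary : Matrix n n ℂ)

lemma Matrix.PosSemidef.sqrt_mul_self {A : Matrix n n ℂ} (hA : A.PosSemidef) :
    hA.sqrt * hA.sqrt = A := by
  unfold Matrix.PosSemidef.sqrt
  set U : Matrix n n ℂ := (hA.1.eigenvectorUnitary : Matrix n n ℂ) with hU
  have hUU : star U * U = 1 := Matrix.mem_unitaryGroup_iff'.mp hA.1.eigenvectorUnitary.2
  have hspec : A = U * diagonal (RCLike.ofReal ∘ hA.1.eigenvalues) * star U :=
    hA.1.spectral_theorem
  calc U * diagonal ((↑) ∘ Real.sqrt ∘ hA.1.eigenvalues) * star U *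
        (U * diagonal ((↑) ∘ Real.sqrt ∘ hA.1.eigenvalues) * star U)
      = U * (diagonal ((↑) ∘ Real.sqrt ∘ hA.1.eigenvalues) * (star U * U) *
        diagonal ((↑) ∘ Real.sqrt ∘ hA.1.eigenvalues)) * star U := by noncomm_ring
    _ = U * diagonal (RCLike.ofReal ∘ hA.1.eigenvalues) * star U := by
      rw [hUU, mul_one, diagonal_mul_diagonal]
      congr 3
      funext i
      simp only [Function.comp_apply, ← Complex.ofReal_mul,
        Real.mul_self_sqrt (hA.eigenvalues_nonneg i)]
      rfl
    _ = A := hspec.symm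

lemma Matrix.PosSemidef.sqrt_isHermitian {A : Matrix n n ℂ} (hA : A.PosSemidef) :
    hA.sqrt.IsHermitian := by
  unfold Matrix.PosSemidef.sqrt
  simp [IsHermitian, conjTranspose_mul, diagonal_conjTranspose, mul_assoc, Function.comp_def,
    star_eq_conjTranspose, Pi.star_def, Complex.star_def, Complex.conj_ofReal]

lemma aux_sqrt_commute {A B : Matrix n n ℂ} (hA : A.PosSemidef) (hAB : A * B = B * A) :
    hA.sqrt * B = B * hA.sqrt := by
  set U : Matrix n n ℂ := (hA.1.eigenvectorUnitary : Matrix n n ℂ) with hU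
  have hUU : star U * U = 1 := Matrix.mem_unitaryGroup_iff'.mp hA.1.eigenvectorUnitary.2
  have hUU' : U * star U = 1 := Matrix.mem_unitaryGroup_iff.mp hA.1.eigenvectorUnitary.2
  set D : Matrix n n ℂ := diagonal (RCLike.ofReal ∘ hA.1.eigenvalues) with hD
  set E : Matrix n n ℂ := diagonal ((↑) ∘ Real.sqrt ∘ hA.1.eigenvalues) with hE
  have hspec : A = U * D * star U := hA.1.spectral_theorem
  set C : Matrix n n ℂ := star U * B * U with hC
  have hBC : B = U * C * star U := by
    rw [hC]
    have : U * (star U * B * U) * star U = (U * star U) * B * (U * star U) := by noncomm_ring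
    rw [this, hUU', one_mul, mul_one]
  have hCD : C * D = D * C := by
    have h1 : (star U * A * U) = D := by
      rw [hspec]
      calc star U * (U * D * star U) * U = (star U * U) * D * (star U * U) := by noncomm_ring
        _ = D := by rw [hUU]; simp
    calc C * D = (star U * B * U) * (star U * A * U) := by rw [h1]
      _ = star U * (B * (U * star U) * A) * U := by noncomm_ring
      _ = star U * (B * A) * U := by rw [hUU']; noncomm_ring
      _ = star U * (A * B) * U := by rw [hAB]
      _ = star U * (A * (U * star U) * B) * U := by rw [hUU']; noncomm_ring
      _ = (star U * A * U) * (star U * B * U) := by noncomm_ring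
      _ = D * C := by rw [h1]
  have hCE : C * E = E * C := by
    refine aux_diag_commute C _ _ hCD ?_
    intro i j hij
    have : hA.1.eigenvalues i = hA.1.eigenvalues j := by
      have := hij
      simp only [Function.comp_apply] at this
      exact_mod_cast this
    simp [this]
  have hsqrt : hA.sqrt = U * E * star U := rfl
  rw [hsqrt]
  calc (U * E * star U) * B = (U * E * star U) * (U * C * star U) := by rw [← hBC]
    _ = U * (E * (star U * U) * C) * star U := by noncomm_ring
    _ = U * (E * C) * star U := by rw [hUU]; noncomm_ring
    _ = U * (C * E) * star U := by rw [hCE]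
    _ = (U * C * star U) * (U * E * star U) := by
        rw [show U * (C * E) * star U = U * (C * (star U * U) * E) * star U by rw [hUU]; noncomm_ring]
        noncomm_ring
    _ = B * (U * E * star U) := by rw [← hBC]

lemma aux_psd_mul {A B : Matrix n n ℂ} (hA : A.PosSemidef) (hB : B.PosSemidef)
    (hAB : A * B = B * A) : (A * B).PosSemidef := by
  have hc := aux_sqrt_commute hA hAB
  have hH : hA.sqrtᴴ = hA.sqrt := hA.sqrt_isHermitian
  have : A * B = hA.sqrtᴴ * B * hA.sqrt := by
    rw [hH, mul_assoc, ← hc, ← mul_assoc, hA.sqrt_mul_self]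
  rw [this]
  exact hB.conjTranspose_mul_mul_same _

omit [DecidableEq n] in
lemma aux_psd_smul {r : ℝ} (hr : 0 ≤ r) {A : Matrix n n ℂ} (hA : A.PosSemidef) :
    ((r : ℂ) • A).PosSemidef := by
  constructor
  · have := hA.1
    unfold Matrix.IsHermitian at *
    rw [conjTranspose_smul, this, Complex.star_def, Complex.conj_ofReal]
  · intro x
    exact (hA.smul (show (0:ℂ) ≤ (r:ℂ) by exact_mod_cast hr)).2 x

omit [DecidableEq n] in
lemma aux_pd_smul {r : ℝ} (hr : 0 < r) {A : Matrix n n ℂ} (hA : A.PosDef) :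
    ((r : ℂ) • A).PosDef := by
  constructor
  · have := hA.1
    unfold Matrix.IsHermitian at *
    rw [conjTranspose_smul, this, Complex.star_def, Complex.conj_ofReal]
  · intro x hx
    exact (hA.smul (show (0:ℂ) < (r:ℂ) by exact_mod_cast hr)).2 hx

omit [DecidableEq n] in
lemma aux_cone_pd {s t : ℝ} (hs : 0 ≤ s) (ht : 0 ≤ t) (hst : s + t = 1)
    {A B : Matrix n n ℂ} (hA : A.PosDef) (hB : B.PosDef) :
    ((s : ℂ) • A + (t : ℂ) • B).PosDef := by
  rcases eq_or_lt_of_le hs with h0 | h0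
  · have ht1 : t = 1 := by linarith
    simp only [← h0, ht1]
    simpa using hB
  · exact (aux_pd_smul h0 hA).add_posSemidef (aux_psd_smul ht hB.posSemidef)

lemma aux_isunit {A : Matrix n n ℂ} (hA : A.PosDef) : IsUnit A.det :=
  isUnit_iff_ne_zero.mpr (ne_of_gt hA.det_pos)

lemma aux_inv_comm {A B : Matrix n n ℂ} (hA : IsUnit A.det) (h : A * B = B * A) :
    A⁻¹ * B = B * A⁻¹ := by
  calc A⁻¹ * B = A⁻¹ * B * (A * A⁻¹) := by rw [mul_nonsing_inv _ hA, mul_one]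
    _ = A⁻¹ * (B * A) * A⁻¹ := by noncomm_ring
    _ = A⁻¹ * (A * B) * A⁻¹ := by rw [h]
    _ = (A⁻¹ * A) * (B * A⁻¹) := by noncomm_ring
    _ = B * A⁻¹ := by rw [nonsing_inv_mul _ hA, one_mul]

/-- Monotonicity of the MMSE error covariance in the estimation-noise level `ε`
(for commuting positive definite `Σ`, `Ups`): `SigP(ε₁) ⪯ SigP(ε₂)` in the Loewner order
whenever `0 ≤ ε₁ ≤ ε₂ ≤ 1`. -/
theorem stmt_16 {M : ℕ} (Sig Ups : Matrix (Fin M) (Fin M) ℂ)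
    (hSig : Sig.PosDef) (hUps : Ups.PosDef) (hcomm : Sig * Ups = Ups * Sig)
    (ε₁ ε₂ : ℝ) (h01 : 0 ≤ ε₁) (h12 : ε₁ ≤ ε₂) (h21 : ε₂ ≤ 1)
    (SigP : ℝ → Matrix (Fin M) (Fin M) ℂ)
    (hdef : ∀ ε : ℝ, SigP ε =
      Sig - ((1 - ε ^ 2 : ℝ) : ℂ) •
        (Sig * (((1 - ε ^ 2 : ℝ) : ℂ) • Sig + ((ε ^ 2 : ℝ) : ℂ) • Ups)⁻¹ * Sig)) :
    (SigP ε₂ - SigP ε₁).PosSemidef := by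
  have hε2 : 0 ≤ ε₂ := le_trans h01 h12
  have hc1 : (0:ℝ) ≤ ε₁ ^ 2 := sq_nonneg _
  have hc2 : (0:ℝ) ≤ ε₂ ^ 2 := sq_nonneg _
  have ha1 : (0:ℝ) ≤ 1 - ε₁ ^ 2 := by nlinarith
  have ha2 : (0:ℝ) ≤ 1 - ε₂ ^ 2 := by nlinarith
  have hdiff : (0:ℝ) ≤ ε₂ ^ 2 - ε₁ ^ 2 := by nlinarith
  set A : Matrix (Fin M) (Fin M) ℂ :=
    ((1 - ε₁ ^ 2 : ℝ) : ℂ) • Sig + ((ε₁ ^ 2 : ℝ) : ℂ) • Ups with hAdef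
  set B : Matrix (Fin M) (Fin M) ℂ :=
    ((1 - ε₂ ^ 2 : ℝ) : ℂ) • Sig + ((ε₂ ^ 2 : ℝ) : ℂ) • Ups with hBdef
  have hApd : A.PosDef := aux_cone_pd ha1 hc1 (by ring) hSig hUps
  have hBpd : B.PosDef := aux_cone_pd ha2 hc2 (by ring) hSig hUps
  have hAu : IsUnit A.det := aux_isunit hApd
  have hBu : IsUnit B.det := aux_isunit hBpd
  -- commutation facts
  have hAB : A * B = B * A := by
    rw [hAdef, hBdef]
    simp only [add_mul, mul_add, smul_mul_assoc, mul_smul_comm, smul_smul, hcomm]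
    module
  have hAUps : A * Ups = Ups * A := by
    rw [hAdef]
    simp only [add_mul, mul_add, smul_mul_assoc, mul_smul_comm, hcomm]
  have hBUps : B * Ups = Ups * B := by
    rw [hBdef]
    simp only [add_mul, mul_add, smul_mul_assoc, mul_smul_comm, hcomm]
  have hAiUps : A⁻¹ * Ups = Ups * A⁻¹ := aux_inv_comm hAu hAUps
  have hBiUps : B⁻¹ * Ups = Ups * B⁻¹ := aux_inv_comm hBu hBUps
  have hAiB : A⁻¹ * B = B * A⁻¹ := aux_inv_comm hAu hAB
  have hAiBi : B⁻¹ * A⁻¹ = A⁻¹ * B⁻¹ := aux_inv_comm hBu hAiB.symm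
  -- the positive semidefinite core
  have hP1 : (A⁻¹ * Ups).PosSemidef :=
    aux_psd_mul hApd.inv.posSemidef hUps.posSemidef hAiUps
  have hcomm2 : (A⁻¹ * Ups) * B⁻¹ = B⁻¹ * (A⁻¹ * Ups) := by
    calc A⁻¹ * Ups * B⁻¹ = A⁻¹ * (Ups * B⁻¹) := by rw [mul_assoc]
      _ = A⁻¹ * (B⁻¹ * Ups) := by rw [hBiUps]
      _ = (A⁻¹ * B⁻¹) * Ups := by rw [mul_assoc]
      _ = (B⁻¹ * A⁻¹) * Ups := by rw [hAiBi]
      _ = B⁻¹ * (A⁻¹ * Ups) := by rw [mul_assoc]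
  have hP : (A⁻¹ * Ups * B⁻¹).PosSemidef :=
    aux_psd_mul hP1 hBpd.inv.posSemidef hcomm2
  -- key algebraic identity
  have e1 : ((1 - ε₁ ^ 2 : ℝ) : ℂ) • B - ((1 - ε₂ ^ 2 : ℝ) : ℂ) • A
      = ((ε₂ ^ 2 - ε₁ ^ 2 : ℝ) : ℂ) • Ups := by
    rw [hAdef, hBdef]
    push_cast
    module
  have e2 : A⁻¹ * (((1 - ε₁ ^ 2 : ℝ) : ℂ) • B - ((1 - ε₂ ^ 2 : ℝ) : ℂ) • A) * B⁻¹
      = ((1 - ε₁ ^ 2 : ℝ) : ℂ) • A⁻¹ - ((1 - ε₂ ^ 2 : ℝ) : ℂ) • B⁻¹ := by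
    rw [mul_sub, sub_mul, mul_smul_comm, mul_smul_comm, smul_mul_assoc, smul_mul_assoc,
      mul_assoc, mul_nonsing_inv _ hBu, mul_one, nonsing_inv_mul _ hAu, one_mul]
  have key : SigP ε₂ - SigP ε₁
      = ((ε₂ ^ 2 - ε₁ ^ 2 : ℝ) : ℂ) • (Sig * (A⁻¹ * Ups * B⁻¹) * Sig) := by
    rw [hdef ε₁, hdef ε₂, ← hAdef, ← hBdef]
    have lhs_eq : (Sig - ((1 - ε₂ ^ 2 : ℝ) : ℂ) • (Sig * B⁻¹ * Sig))
        - (Sig - ((1 - ε₁ ^ 2 : ℝ) : ℂ) • (Sig * A⁻¹ * Sig))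
        = Sig * (((1 - ε₁ ^ 2 : ℝ) : ℂ) • A⁻¹ - ((1 - ε₂ ^ 2 : ℝ) : ℂ) • B⁻¹) * Sig := by
      simp only [mul_sub, sub_mul, mul_smul_comm, smul_mul_assoc]
      abel
    rw [lhs_eq, ← e2, e1, mul_smul_comm, smul_mul_assoc, mul_smul_comm, smul_mul_assoc]
  rw [key]
  refine aux_psd_smul hdiff ?_
  have := hP.conjTranspose_mul_mul_same Sig
  rwa [hSig.1] at this
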